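/- Let A be an N×N complex matrix whose spectral radius is strictly less than √2, and let p be the standard basis of discrete analytic polynomials on Λ₊. Then det(1+α₊A) ≠ 0 and det(1+α₋A) ≠ 0, and for every z ∈ Λ₊ the series Σ_{n=0}^{∞} p n (z) · Aⁿ converges with sum e_A(z) = (1+A)^{Re z} · (1+α₊A)^{Im z} · (1+α₋A)^{−Im z}. -/

import Mathlib

open Complex

noncomputable section

/-- The Gaussian integer lattice Λ = ℤ + iℤ. -/
abbrev GI := GaussianInt

/-- The lattice element i. -/
def Ii : GI := ⟨0, 1⟩

/-- The right half-lattice Λ₊ = {z ∈ Λ : Re z ≥ 0}. -/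
def Lp := {z : GI // 0 ≤ z.re}

/-- The point 0 of Λ₊. -/
def pt0 : Lp := ⟨0, le_refl 0⟩

/-- The shift z ↦ z + 1 on Λ₊. -/
def shx (z : Lp) : Lp := ⟨z.1 + 1, by have := z.2; simp [Zsqrtd.re_add]; omega⟩

/-- The shift z ↦ z + i on Λ₊. -/
def shy (z : Lp) : Lp := ⟨z.1 + Ii, by have := z.2; simp [Zsqrtd.re_add, Ii]; omega⟩

/-- α₊ = (1+i)/2. -/
def ap : ℂ := (1 + I) / 2

/-- α₋ = (1−i)/2. -/
def am : ℂ := (1 - I) / 2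

/-- The difference operator δ_x on functions on Λ₊. -/
def dxp (f : Lp → ℂ) : Lp → ℂ := fun z => f (shx z) - f z

/-- The difference operator δ_y on functions on Λ₊. -/
def dyp (f : Lp → ℂ) : Lp → ℂ := fun z => f (shy z) - f z

/-- Discrete analyticity on the right half-lattice Λ₊. -/
def DAp (f : Lp → ℂ) : Prop :=
  ∀ z : Lp, (f (shx (shy z)) - f z) / (1 + I) = (f (shx z) - f (shy z)) / (1 - I)

/-- The defining property of the standard basis of discrete analytic polynomials
on Λ₊. -/
def IsStdBasisP (p : ℕ → Lp → ℂ) : Prop :=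
  (∀ n, DAp (p n)) ∧ (∀ z : Lp, p 0 z = 1) ∧ (∀ n, p (n + 1) pt0 = 0) ∧
    (∀ n, dxp (p (n + 1)) = p n)

/-- e_A(z) = (1+A)^{Re z} (1+α₊A)^{Im z} (1+α₋A)^{−Im z}, where negative integer
powers are powers of the inverse matrix. -/
def eMat {N : ℕ} (A : Matrix (Fin N) (Fin N) ℂ) (z : Lp) : Matrix (Fin N) (Fin N) ℂ :=
  (1 + A) ^ z.1.re.toNat * (1 + ap • A) ^ (z.1.im : ℤ) * (1 + am • A) ^ (-(z.1.im : ℤ))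

/-! ### Auxiliary scalar lemmas -/

section ScalarAux

open Filter

lemma one_add_I_ne : (1 + I) ≠ 0 := by simp [Complex.ext_iff]

lemma one_sub_I_ne : (1 - I) ≠ 0 := by simp [Complex.ext_iff]

lemma ap_ne : ap ≠ 0 := by
  simp only [ap, div_ne_zero_iff]; exact ⟨one_add_I_ne, two_ne_zero⟩

lemma am_ne : am ≠ 0 := by
  simp only [am, div_ne_zero_iff]; exact ⟨one_sub_I_ne, two_ne_zero⟩

lemma sqrt2_mul_self : Real.sqrt 2 * Real.sqrt 2 = 2 :=
  Real.mul_self_sqrt (by norm_num)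

lemma abs_one_add_I : ‖(1 + I)‖ = Real.sqrt 2 := by
  rw [Complex.norm_def]
  norm_num [Complex.normSq_apply]

lemma abs_one_sub_I : ‖(1 - I)‖ = Real.sqrt 2 := by
  rw [Complex.norm_def]
  norm_num [Complex.normSq_apply]

lemma abs_ap : ‖ap‖ = Real.sqrt 2 / 2 := by
  rw [ap, norm_div, abs_one_add_I]; norm_num

lemma abs_am : ‖am‖ = Real.sqrt 2 / 2 := by
  rw [am, norm_div, abs_one_sub_I]; norm_num

lemma abs_ap_inv : ‖ap⁻¹‖ = Real.sqrt 2 := by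
  have h2 : Real.sqrt 2 ≠ 0 := by positivity
  rw [norm_inv, abs_ap]
  field_simp
  rw [Real.sq_sqrt (by norm_num)]

lemma abs_am_inv : ‖am⁻¹‖ = Real.sqrt 2 := by
  have h2 : Real.sqrt 2 ≠ 0 := by positivity
  rw [norm_inv, abs_am]
  field_simp
  rw [Real.sq_sqrt (by norm_num)]

lemma abs_ap_mul : ‖ap‖ * Real.sqrt 2 = 1 := by
  rw [abs_ap, div_mul_eq_mul_div, sqrt2_mul_self]; norm_num

lemma abs_am_mul : ‖am‖ * Real.sqrt 2 = 1 := by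
  rw [abs_am, div_mul_eq_mul_div, sqrt2_mul_self]; norm_num

end ScalarAux

/-! ### Spectrum lemmas -/

section SpectrumAux

variable {N : ℕ}

lemma smul_mem_spec (A : Matrix (Fin N) (Fin N) ℂ) {c μ : ℂ} (hc : c ≠ 0)
    (h : μ ∈ spectrum ℂ (c • A)) : c⁻¹ * μ ∈ spectrum ℂ A := by
  rw [spectrum.mem_iff] at h ⊢
  intro hu
  apply h
  have key : algebraMap ℂ (Matrix (Fin N) (Fin N) ℂ) μ - c • A
      = c • (algebraMap ℂ (Matrix (Fin N) (Fin N) ℂ) (c⁻¹ * μ) - A) := by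
    rw [Algebra.algebraMap_eq_smul_one, Algebra.algebraMap_eq_smul_one, smul_sub, smul_smul,
      ← mul_assoc, mul_inv_cancel₀ hc, one_mul]
  rw [key, Matrix.isUnit_iff_isUnit_det, Matrix.det_smul, isUnit_iff_ne_zero]
  rw [Matrix.isUnit_iff_isUnit_det, isUnit_iff_ne_zero] at hu
  exact mul_ne_zero (pow_ne_zero _ hc) hu

lemma isUnit_one_add_smul (A : Matrix (Fin N) (Fin N) ℂ)
    (hA : ∀ μ ∈ spectrum ℂ A, ‖μ‖ < Real.sqrt 2)
    {c : ℂ} (hc : c ≠ 0) (habs : ‖c⁻¹‖ = Real.sqrt 2) :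
    IsUnit (1 + c • A).det := by
  rw [isUnit_iff_ne_zero]
  intro hdet
  have key : (1 : Matrix (Fin N) (Fin N) ℂ) + c • A
      = (-c) • (algebraMap ℂ (Matrix (Fin N) (Fin N) ℂ) (-c⁻¹) - A) := by
    rw [Algebra.algebraMap_eq_smul_one, smul_sub, smul_smul, mul_neg, neg_mul,
      mul_inv_cancel₀ hc, neg_neg, neg_smul, sub_neg_eq_add, one_smul]
  have hmem : (-c⁻¹) ∈ spectrum ℂ A := by
    rw [spectrum.mem_iff, Matrix.isUnit_iff_isUnit_det, isUnit_iff_ne_zero, not_not]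
    have h0 := hdet
    rw [key, Matrix.det_smul] at h0
    exact (mul_eq_zero.mp h0).resolve_left (pow_ne_zero _ (neg_ne_zero.mpr hc))
  have h1 := hA _ hmem
  rw [norm_neg, habs] at h1
  exact lt_irrefl _ h1

end SpectrumAux

/-! ### Matrix algebra lemmas for eMat -/

section MatAlgAux

variable {N : ℕ}

lemma comm_one_add (A : Matrix (Fin N) (Fin N) ℂ) (a b : ℂ) :
    Commute (1 + a • A) (1 + b • A) := by
  show _ = _
  simp only [add_mul, mul_add, one_mul, mul_one, smul_mul_assoc, mul_smul_comm, smul_smul,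
    smul_add]
  rw [mul_comm b a]
  abel

lemma comm_one_add' (A : Matrix (Fin N) (Fin N) ℂ) (b : ℂ) :
    Commute (1 + A) (1 + b • A) := by
  have := comm_one_add A 1 b
  rwa [one_smul] at this

lemma eMat_pt0 (A : Matrix (Fin N) (Fin N) ℂ) : eMat A pt0 = 1 := by
  unfold eMat pt0
  simp

lemma eMat_shx (A : Matrix (Fin N) (Fin N) ℂ) (z : Lp) :
    eMat A (shx z) = (1 + A) * eMat A z := by
  unfold eMat shx
  simp only [Zsqrtd.re_add, Zsqrtd.im_add, Zsqrtd.re_one, Zsqrtd.im_one, add_zero]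
  have h1 : (z.1.re + 1).toNat = z.1.re.toNat + 1 := by
    have := z.2; omega
  rw [h1, pow_succ']
  simp only [mul_assoc]

lemma eMat_shy (A : Matrix (Fin N) (Fin N) ℂ) (z : Lp)
    (hdQ : IsUnit (1 + ap • A).det) (hdR : IsUnit (1 + am • A).det) :
    (1 + am • A) * eMat A (shy z) = (1 + ap • A) * eMat A z := by
  unfold eMat shy
  simp only [Zsqrtd.re_add, Zsqrtd.im_add, Ii, add_zero]
  set P : Matrix (Fin N) (Fin N) ℂ := 1 + A
  set Q : Matrix (Fin N) (Fin N) ℂ := 1 + ap • A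
  set R : Matrix (Fin N) (Fin N) ℂ := 1 + am • A
  set k := z.1.re.toNat
  set y := z.1.im
  have cQR : Commute Q R := comm_one_add A ap am
  have cPQ : Commute P Q := comm_one_add' A ap
  have cPR : Commute P R := comm_one_add' A am
  have hQ1 : Q ^ (y + 1 : ℤ) = Q ^ (y : ℤ) * Q := Matrix.zpow_add_one hdQ y
  have hR1 : R * R ^ (-(y + 1) : ℤ) = R ^ (-y : ℤ) := by
    have h2 : (-y : ℤ) = 1 + (-(y + 1)) := by ring
    rw [h2, Matrix.zpow_add hdR, zpow_one]
  set X : Matrix (Fin N) (Fin N) ℂ := P ^ k * Q ^ (y : ℤ) * Q with hX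
  have cRX : Commute R X :=
    ((cPR.symm.pow_right k).mul_right (Matrix.Commute.zpow_right cQR.symm y)).mul_right cQR.symm
  have cQPk : Commute (P ^ k) Q := cPQ.pow_left k
  have cQy : Commute (Q ^ (y : ℤ)) Q := Matrix.Commute.zpow_left (Commute.refl Q) y
  calc R * (P ^ k * Q ^ (y + 1 : ℤ) * R ^ (-(y + 1) : ℤ))
      = R * (X * R ^ (-(y + 1) : ℤ)) := by rw [hX, hQ1]; simp only [mul_assoc]
    _ = R * X * R ^ (-(y + 1) : ℤ) := by rw [hX]; simp only [mul_assoc]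
    _ = X * R * R ^ (-(y + 1) : ℤ) := by rw [cRX.eq]
    _ = X * (R * R ^ (-(y + 1) : ℤ)) := by rw [mul_assoc]
    _ = X * R ^ (-y : ℤ) := by rw [hR1]
    _ = Q * (P ^ k * Q ^ (y : ℤ)) * R ^ (-y : ℤ) := by
        rw [hX, mul_assoc (P ^ k), cQy.eq, ← mul_assoc, cQPk.eq]; simp only [mul_assoc]
    _ = Q * (P ^ k * Q ^ (y : ℤ) * R ^ (-y : ℤ)) := by simp only [mul_assoc]

lemma sum_rec (A : Matrix (Fin N) (Fin N) ℂ) (u v : ℕ → ℂ) (b d : ℂ) (h0 : u 0 = v 0)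
    (hrec : ∀ n, u (n + 1) = v (n + 1) + b * v n + d * u n) (M : ℕ) :
    ∑ n ∈ Finset.range (M + 1), u n • A ^ n
      = ∑ n ∈ Finset.range (M + 1), v n • A ^ n
        + b • (A * ∑ n ∈ Finset.range M, v n • A ^ n)
        + d • (A * ∑ n ∈ Finset.range M, u n • A ^ n) := by
  have shift : ∀ (c : ℂ) (w : ℕ → ℂ),
      ∑ n ∈ Finset.range M, (c * w n) • A ^ (n + 1)
        = c • (A * ∑ n ∈ Finset.range M, w n • A ^ n) := by
    intro c w
    rw [Finset.mul_sum, Finset.smul_sum]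
    apply Finset.sum_congr rfl
    intro n _
    rw [pow_succ', mul_smul_comm, mul_smul]
  have hterm : ∀ n ∈ Finset.range M, u (n + 1) • A ^ (n + 1)
      = v (n + 1) • A ^ (n + 1) + (b * v n) • A ^ (n + 1) + (d * u n) • A ^ (n + 1) := by
    intro n _
    rw [hrec n, add_smul, add_smul]
  rw [Finset.sum_range_succ' (fun n => u n • A ^ n) M,
    Finset.sum_range_succ' (fun n => v n • A ^ n) M,
    Finset.sum_congr rfl hterm, Finset.sum_add_distrib, Finset.sum_add_distrib,
    shift, shift, h0]
  abel

lemma p_rel (p : ℕ → Lp → ℂ) (hDA : ∀ n, DAp (p n)) (hdx : ∀ n, dxp (p (n + 1)) = p n)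
    (n : ℕ) (w : Lp) :
    p (n + 1) (shy w) = p (n + 1) w + ap * p n w + (-am) * p n (shy w) := by
  have hx1 := congrFun (hdx n) (shy w)
  have hx2 := congrFun (hdx n) w
  simp only [dxp] at hx1 hx2
  have h := hDA (n + 1) w
  rw [div_eq_div_iff one_add_I_ne one_sub_I_ne] at h
  simp only [ap, am]
  linear_combination h / 2 - (1 - I) / 2 * hx1 + (1 + I) / 2 * hx2

lemma p_rel' (p : ℕ → Lp → ℂ) (hDA : ∀ n, DAp (p n)) (hdx : ∀ n, dxp (p (n + 1)) = p n)
    (n : ℕ) (w : Lp) :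
    p (n + 1) w = p (n + 1) (shy w) + am * p n (shy w) + (-ap) * p n w := by
  linear_combination -p_rel p hDA hdx n w

end MatAlgAux

/-! ### Analytic lemmas (with the l∞ operator norm on matrices) -/

open Filter in
lemma tendsto_affine {E : Type*} [NormedRing E] [CompleteSpace E]
    (B : E) (hB : Summable fun n : ℕ => ‖B ^ n‖)
    (S g : ℕ → E) (G L : E)
    (hrec : ∀ M, S (M + 1) = g M + B * S M)
    (hg : Tendsto g atTop (nhds G)) (hL : L = G + B * L) :
    Tendsto S atTop (nhds L) := by
  set a : ℕ → E := fun j => g j - G with ha_def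
  have ha : Tendsto a atTop (nhds 0) := by
    simpa using hg.sub (tendsto_const_nhds (x := G))
  obtain ⟨K, hK⟩ : ∃ K : ℝ, ∀ j, ‖a j‖ ≤ K := by
    have hbdd := (ha.norm).bddAbove_range
    obtain ⟨K, hK⟩ := hbdd
    exact ⟨K, fun j => hK (Set.mem_range_self j)⟩
  have hK0 : 0 ≤ K := le_trans (norm_nonneg _) (hK 0)
  have key : ∀ M, S M - L
      = B ^ M * (S 0 - L) + ∑ j ∈ Finset.range M, B ^ (M - 1 - j) * a j := by
    intro M
    induction M with
    | zero => simp
    | succ M ih =>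
      have h1 : S (M + 1) - L = a M + B * (S M - L) := by
        show S (M + 1) - L = (g M - G) + B * (S M - L)
        rw [hrec M, mul_sub]
        nth_rewrite 1 [hL]
        abel
      have h2 : ∀ j ∈ Finset.range M, B * (B ^ (M - 1 - j) * a j) = B ^ (M - j) * a j := by
        intro j hj
        rw [Finset.mem_range] at hj
        rw [← mul_assoc, ← pow_succ']
        congr 2
        omega
      rw [h1, ih, mul_add, ← mul_assoc, ← pow_succ', Finset.mul_sum, Finset.sum_congr rfl h2]
      simp only [Nat.add_sub_cancel]
      rw [Finset.sum_range_succ]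
      simp only [Nat.sub_self, pow_zero, one_mul]
      abel
  have h2 : Tendsto (fun M => B ^ M * (S 0 - L)) atTop (nhds 0) := by
    apply squeeze_zero_norm (fun M => norm_mul_le _ _)
    simpa using hB.tendsto_atTop_zero.mul_const ‖S 0 - L‖
  have h3 : Tendsto (fun M => ∑ j ∈ Finset.range M, B ^ (M - 1 - j) * a j) atTop (nhds 0) := by
    have hrefl : ∀ M, ∑ j ∈ Finset.range M, B ^ (M - 1 - j) * a j
        = ∑ k ∈ Finset.range M, B ^ k * a (M - 1 - k) := by
      intro M
      rw [← Finset.sum_range_reflect (fun k => B ^ k * a (M - 1 - k)) M]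
      apply Finset.sum_congr rfl
      intro j hj
      rw [Finset.mem_range] at hj
      congr 2
      omega
    set F : ℕ → ℕ → E := fun M k => if k < M then B ^ k * a (M - 1 - k) else 0 with hF
    have hFsum : ∀ M, ∑ k ∈ Finset.range M, B ^ k * a (M - 1 - k) = ∑' k, F M k := by
      intro M
      rw [tsum_eq_sum (s := Finset.range M) (fun k hk => by
        simp only [hF]
        rw [if_neg (by simpa using hk)])]
      apply Finset.sum_congr rfl
      intro k hk
      rw [Finset.mem_range] at hk
      simp only [hF]
      rw [if_pos hk]
    have hpt : ∀ k, Tendsto (fun M => F M k) atTop (nhds 0) := by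
      intro k
      have h4 : Tendsto (fun M : ℕ => B ^ k * a (M - 1 - k)) atTop (nhds 0) := by
        have h5 : Tendsto (fun M : ℕ => a (M - 1 - k)) atTop (nhds 0) := by
          have := ha.comp (tendsto_sub_atTop_nat (1 + k))
          simpa [Function.comp_def, Nat.sub_sub] using this
        simpa using h5.const_mul (B ^ k)
      apply h4.congr'
      filter_upwards [eventually_gt_atTop k] with M hM
      simp only [hF]
      rw [if_pos hM]
    have hbound : ∀ᶠ M in atTop, ∀ k, ‖F M k‖ ≤ ‖B ^ k‖ * K := by
      apply Eventually.of_forall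
      intro M k
      by_cases hk : k < M
      · simp only [hF]
        rw [if_pos hk]
        exact (norm_mul_le _ _).trans (mul_le_mul_of_nonneg_left (hK _) (norm_nonneg _))
      · simp only [hF]
        rw [if_neg hk]
        simp only [norm_zero]
        positivity
    have htan := tendsto_tsum_of_dominated_convergence (hB.mul_right K) hpt hbound
    rw [tsum_zero] at htan
    exact htan.congr (fun M => by rw [← hFsum M, ← hrefl M])
  have h5 : Tendsto (fun M => S M - L) atTop (nhds 0) := by
    simpa using (h2.add h3).congr (fun M => (key M).symm)
  have h6 := h5.add (tendsto_const_nhds (x := L))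
  simpa using h6

section NormAux

open Filter

attribute [local instance] Matrix.linftyOpNormedAddCommGroup Matrix.linftyOpNormedRing
  Matrix.linftyOpNormedAlgebra

variable {N : ℕ}

lemma summable_norm_pow_smul (A : Matrix (Fin N) (Fin N) ℂ)
    (hA : ∀ μ ∈ spectrum ℂ A, ‖μ‖ < Real.sqrt 2)
    {c : ℂ} (hc : c ≠ 0) (habs : ‖c‖ * Real.sqrt 2 ≤ 1) :
    Summable (fun n : ℕ => ‖(c • A) ^ n‖) := by
  set B := c • A with hB
  have hrad : spectralRadius ℂ B < 1 := by
    by_cases hne : (spectrum ℂ B).Nonempty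
    · have h1 : spectralRadius ℂ B < (1 : NNReal) := by
        apply spectrum.spectralRadius_lt_of_forall_lt_of_nonempty hne
        intro k hk
        have hmem := smul_mem_spec A hc hk
        have h2 := hA _ hmem
        have h3 : ‖k‖ < 1 := by
          have h4 : ‖c⁻¹ * k‖ < Real.sqrt 2 := h2
          rw [norm_mul, norm_inv] at h4
          have hc' : 0 < ‖c‖ := by
            simpa using norm_pos_iff.mpr hc
          calc ‖k‖ = ‖c‖ * (‖c‖⁻¹ * ‖k‖) := by
                field_simp
            _ < ‖c‖ * Real.sqrt 2 := by
                apply mul_lt_mul_of_pos_left h4 hc'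
            _ ≤ 1 := habs
        have h5 : ‖k‖ < 1 := by exact h3
        rw [← NNReal.coe_lt_coe]
        simpa [coe_nnnorm] using h5
      simpa using h1
    · rw [Set.not_nonempty_iff_eq_empty] at hne
      rw [spectralRadius, hne]
      simp
  obtain ⟨r, hρr, hr1⟩ := ENNReal.lt_iff_exists_nnreal_btwn.mp hrad
  have hgel := spectrum.pow_nnnorm_pow_one_div_tendsto_nhds_spectralRadius B
  have hev : ∀ᶠ n : ℕ in atTop, (‖B ^ n‖₊ : ENNReal) ^ (1 / (n : ℝ)) < (r : ENNReal) :=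
    hgel.eventually_lt_const hρr
  have hr1' : (r : ℝ) < 1 := by exact_mod_cast hr1
  apply Summable.of_norm_bounded_eventually_nat (g := fun n => (r : ℝ) ^ n)
    (summable_geometric_of_lt_one r.coe_nonneg hr1')
  filter_upwards [hev, eventually_ge_atTop 1] with n hn h1n
  have hn' : (n : ℝ) ≠ 0 := by positivity
  have h5 : ((‖B ^ n‖₊ : ENNReal) ^ (1 / (n : ℝ))) ^ (n : ℕ) ≤ (r : ENNReal) ^ (n : ℕ) :=
    pow_le_pow_left' hn.le n
  rw [← ENNReal.rpow_natCast ((‖B ^ n‖₊ : ENNReal) ^ (1 / (n : ℝ))), ← ENNReal.rpow_mul,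
    one_div, inv_mul_cancel₀ hn', ENNReal.rpow_one] at h5
  have h6 : (‖B ^ n‖₊ : ENNReal) ≤ ((r ^ n : NNReal) : ENNReal) := by
    rw [ENNReal.coe_pow]; exact h5
  rw [ENNReal.coe_le_coe] at h6
  have h7 : ‖B ^ n‖ ≤ (r : ℝ) ^ n := by
    have := NNReal.coe_le_coe.mpr h6
    simpa [coe_nnnorm] using this
  simpa using h7

lemma step_generic (A : Matrix (Fin N) (Fin N) ℂ) (u v : ℕ → ℂ) (b d : ℂ)
    (h0 : u 0 = v 0) (hrec : ∀ n, u (n + 1) = v (n + 1) + b * v n + d * u n)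
    (hsum : Summable fun n : ℕ => ‖(d • A) ^ n‖)
    (Lv Lu : Matrix (Fin N) (Fin N) ℂ)
    (hv : Tendsto (fun M => ∑ n ∈ Finset.range M, v n • A ^ n) atTop (nhds Lv))
    (hLu : Lu = (Lv + b • (A * Lv)) + (d • A) * Lu) :
    Tendsto (fun M => ∑ n ∈ Finset.range M, u n • A ^ n) atTop (nhds Lu) := by
  apply tendsto_affine (d • A) hsum _
    (fun M => (∑ n ∈ Finset.range (M + 1), v n • A ^ n)
      + b • (A * ∑ n ∈ Finset.range M, v n • A ^ n))
    (Lv + b • (A * Lv)) Lu ?_ ?_ hLu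
  · intro M
    rw [sum_rec A u v b d h0 hrec M, smul_mul_assoc]
  · have h1 : Tendsto (fun M => ∑ n ∈ Finset.range (M + 1), v n • A ^ n) atTop (nhds Lv) :=
      (tendsto_add_atTop_iff_nat 1).mpr hv
    have h2 : Tendsto (fun M => A * ∑ n ∈ Finset.range M, v n • A ^ n) atTop
        (nhds (A * Lv)) := hv.const_mul A
    exact h1.add (h2.const_smul b)

lemma step_x (A : Matrix (Fin N) (Fin N) ℂ) (p : ℕ → Lp → ℂ)
    (hp0 : ∀ w : Lp, p 0 w = 1)
    (hdxf : ∀ n w, p (n + 1) (shx w) = p (n + 1) w + p n w) (z : Lp)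
    (h : Tendsto (fun M => ∑ n ∈ Finset.range M, p n z • A ^ n) atTop (nhds (eMat A z))) :
    Tendsto (fun M => ∑ n ∈ Finset.range M, p n (shx z) • A ^ n) atTop
      (nhds (eMat A (shx z))) := by
  apply step_generic A (fun n => p n (shx z)) (fun n => p n z) 1 0
  · rw [hp0, hp0]
  · intro n
    rw [hdxf n z]
    ring
  · apply summable_of_ne_finset_zero (s := ({0} : Finset ℕ))
    intro n hn
    simp only [Finset.mem_singleton] at hn
    rw [zero_smul, zero_pow hn, norm_zero]
  · exact h
  · rw [eMat_shx A z, zero_smul, zero_mul, add_zero, one_smul, add_mul, one_mul]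

lemma step_y_fwd (A : Matrix (Fin N) (Fin N) ℂ)
    (hA : ∀ μ ∈ spectrum ℂ A, ‖μ‖ < Real.sqrt 2)
    (hdQ : IsUnit (1 + ap • A).det) (hdR : IsUnit (1 + am • A).det)
    (p : ℕ → Lp → ℂ) (hp0 : ∀ w : Lp, p 0 w = 1)
    (hrel : ∀ n w, p (n + 1) (shy w) = p (n + 1) w + ap * p n w + (-am) * p n (shy w))
    (z : Lp)
    (h : Tendsto (fun M => ∑ n ∈ Finset.range M, p n z • A ^ n) atTop (nhds (eMat A z))) :
    Tendsto (fun M => ∑ n ∈ Finset.range M, p n (shy z) • A ^ n) atTop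
      (nhds (eMat A (shy z))) := by
  have hkey : eMat A (shy z) + am • (A * eMat A (shy z))
      = eMat A z + ap • (A * eMat A z) := by
    have h1 := eMat_shy A z hdQ hdR
    rw [add_mul, add_mul, one_mul, one_mul, smul_mul_assoc, smul_mul_assoc] at h1
    exact h1
  apply step_generic A (fun n => p n (shy z)) (fun n => p n z) ap (-am)
  · rw [hp0, hp0]
  · exact fun n => hrel n z
  · exact summable_norm_pow_smul A hA (neg_ne_zero.mpr am_ne)
      (by rw [norm_neg]; exact le_of_eq abs_am_mul)
  · exact h
  · rw [neg_smul, neg_mul, smul_mul_assoc, ← hkey]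
    abel

lemma step_y_bwd (A : Matrix (Fin N) (Fin N) ℂ)
    (hA : ∀ μ ∈ spectrum ℂ A, ‖μ‖ < Real.sqrt 2)
    (hdQ : IsUnit (1 + ap • A).det) (hdR : IsUnit (1 + am • A).det)
    (p : ℕ → Lp → ℂ) (hp0 : ∀ w : Lp, p 0 w = 1)
    (hrel : ∀ n w, p (n + 1) (shy w) = p (n + 1) w + ap * p n w + (-am) * p n (shy w))
    (z : Lp)
    (h : Tendsto (fun M => ∑ n ∈ Finset.range M, p n (shy z) • A ^ n) atTop
      (nhds (eMat A (shy z)))) :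
    Tendsto (fun M => ∑ n ∈ Finset.range M, p n z • A ^ n) atTop (nhds (eMat A z)) := by
  have hkey : eMat A (shy z) + am • (A * eMat A (shy z))
      = eMat A z + ap • (A * eMat A z) := by
    have h1 := eMat_shy A z hdQ hdR
    rw [add_mul, add_mul, one_mul, one_mul, smul_mul_assoc, smul_mul_assoc] at h1
    exact h1
  apply step_generic A (fun n => p n z) (fun n => p n (shy z)) am (-ap)
  · rw [hp0, hp0]
  · intro n
    linear_combination -hrel n z
  · exact summable_norm_pow_smul A hA (neg_ne_zero.mpr ap_ne)
      (by rw [norm_neg]; exact le_of_eq abs_ap_mul)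
  · exact h
  · rw [neg_smul, neg_mul, smul_mul_assoc, hkey]
    abel

lemma step_base (A : Matrix (Fin N) (Fin N) ℂ) (p : ℕ → Lp → ℂ)
    (hp0 : ∀ w : Lp, p 0 w = 1) (hpt0 : ∀ n, p (n + 1) pt0 = 0) :
    Tendsto (fun M => ∑ n ∈ Finset.range M, p n pt0 • A ^ n) atTop (nhds (eMat A pt0)) := by
  rw [eMat_pt0]
  have hsum1 : ∀ M, ∑ n ∈ Finset.range (M + 1), p n pt0 • A ^ n = 1 := by
    intro M
    induction M with
    | zero => simp [hp0 pt0]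
    | succ M ih => rw [Finset.sum_range_succ, ih, hpt0 M, zero_smul, add_zero]
  apply tendsto_atTop_of_eventually_const (i₀ := 1)
  intro M hM
  obtain ⟨K, rfl⟩ : ∃ K, M = K + 1 := ⟨M - 1, by omega⟩
  exact hsum1 K

end NormAux

/-- if the spectral radius of A is < √2 then det(1+α₊A) ≠ 0,
det(1+α₋A) ≠ 0, and for every z ∈ Λ₊ the series Σ p n (z) Aⁿ converges to e_A(z). -/
theorem stmt14 (N : ℕ) (A : Matrix (Fin N) (Fin N) ℂ)
    (hA : ∀ μ ∈ spectrum ℂ A, ‖μ‖ < Real.sqrt 2)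
    (p : ℕ → Lp → ℂ) (hp : IsStdBasisP p) :
    (1 + ap • A).det ≠ 0 ∧ (1 + am • A).det ≠ 0 ∧
    ∀ z : Lp,
      Filter.Tendsto (fun M => ∑ n ∈ Finset.range M, p n z • A ^ n)
        Filter.atTop (nhds (eMat A z)) := by
  obtain ⟨hDA, hp0, hpt0, hdx⟩ := hp
  have hdQ : IsUnit (1 + ap • A).det := isUnit_one_add_smul A hA ap_ne abs_ap_inv
  have hdR : IsUnit (1 + am • A).det := isUnit_one_add_smul A hA am_ne abs_am_inv
  refine ⟨hdQ.ne_zero, hdR.ne_zero, ?_⟩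
  have hdxf : ∀ n w, p (n + 1) (shx w) = p (n + 1) w + p n w := by
    intro n w
    have := congrFun (hdx n) w
    simp only [dxp] at this
    linear_combination this
  have hrel : ∀ n w, p (n + 1) (shy w) = p (n + 1) w + ap * p n w + (-am) * p n (shy w) :=
    p_rel p hDA hdx
  have key : ∀ (y x : ℤ) (hx : 0 ≤ x),
      Filter.Tendsto (fun M => ∑ n ∈ Finset.range M, p n (⟨⟨x, y⟩, hx⟩ : Lp) • A ^ n)
        Filter.atTop (nhds (eMat A ⟨⟨x, y⟩, hx⟩)) := by
    intro y
    induction y using Int.induction_on with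
    | zero =>
      intro x hx
      obtain ⟨n, rfl⟩ := Int.eq_ofNat_of_zero_le hx
      revert hx
      induction n with
      | zero =>
        intro hx
        have hpoint : (⟨⟨((0 : ℕ) : ℤ), 0⟩, hx⟩ : Lp) = pt0 :=
          Subtype.ext (by simp [pt0, Zsqrtd.ext_iff])
        rw [hpoint]
        exact step_base A p hp0 hpt0
      | succ n ih =>
        intro hx
        have hxn : (0 : ℤ) ≤ ((n : ℕ) : ℤ) := Int.natCast_nonneg n
        have hpoint : (⟨⟨(((n + 1) : ℕ) : ℤ), 0⟩, hx⟩ : Lp) = shx ⟨⟨((n : ℕ) : ℤ), 0⟩, hxn⟩ :=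
          Subtype.ext (by simp [shx, Zsqrtd.ext_iff])
        rw [hpoint]
        exact step_x A p hp0 hdxf _ (ih hxn)
    | succ y ihy =>
      intro x hx
      have hpoint : (⟨⟨x, (y : ℤ) + 1⟩, hx⟩ : Lp) = shy ⟨⟨x, (y : ℤ)⟩, hx⟩ :=
        Subtype.ext (by simp [shy, Ii, Zsqrtd.ext_iff])
      rw [hpoint]
      exact step_y_fwd A hA hdQ hdR p hp0 hrel _ (ihy x hx)
    | pred y ihy =>
      intro x hx
      apply step_y_bwd A hA hdQ hdR p hp0 hrel
      have hpoint : shy (⟨⟨x, -(y : ℤ) - 1⟩, hx⟩ : Lp) = ⟨⟨x, -(y : ℤ)⟩, hx⟩ :=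
        Subtype.ext (by simp [shy, Ii, Zsqrtd.ext_iff])
      rw [hpoint]
      exact ihy x hx
  intro z
  obtain ⟨⟨x, y⟩, hx⟩ := z
  exact key y x hx
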